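/- Suppose 0 < |a(g)| < a(ι), and let λ_u(g) be defined by the two-case formula of the previous statement. Then for λ > λ_0: |b(g) − λ a(g)| ≥ |b(ι) − λ a(ι)| if and only if λ ≤ λ_u(g). -/

import Mathlib

theorem stmt_7 (A B ag bg : ℝ) (hA : 0 < A) (hag : 0 < |ag|) (hlt : |ag| < A)
    (lam0 : ℝ) (hlam0 : lam0 = B / A)
    (lamu : ℝ)
    (hlamu : lamu = if lam0 ≤ bg / ag then
        (B / A) * (|A| / (|A| + |ag|)) + (bg / ag) * (|ag| / (|A| + |ag|))
      else
        (B / A) * (|A| / (|A| - |ag|)) - (bg / ag) * (|ag| / (|A| - |ag|))) :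
    ∀ lam : ℝ, lam0 < lam → (|B - lam * A| ≤ |bg - lam * ag| ↔ lam ≤ lamu) := by
  intro lam hlam
  have hA' : A ≠ 0 := ne_of_gt hA
  have hag' : ag ≠ 0 := by
    intro h; simp [h] at hag
  have hAabs : |A| = A := abs_of_pos hA
  set μ := bg / ag with hμ
  have habs : |bg - lam * ag| = |ag| * |μ - lam| := by
    rw [← abs_mul]
    congr 1
    field_simp [hμ]
    linarith [show ag * μ = bg by rw [hμ]; field_simp]
  have hBlt : B - lam * A < 0 := by
    rw [hlam0] at hlam
    have := (div_lt_iff₀ hA).mp hlam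
    linarith
  have hB : |B - lam * A| = lam * A - B := by rw [abs_of_neg hBlt]; ring
  rw [habs, hB, hlamu, hAabs]
  have hd1 : 0 < A + |ag| := by linarith
  have hd2 : 0 < A - |ag| := by linarith
  split_ifs with hcase
  · rw [hlam0] at hcase
    have hμA : B ≤ μ * A := by
      have := (div_le_iff₀ hA).mp hcase
      linarith
    have he1 : B / A * (A / (A + |ag|)) + μ * (|ag| / (A + |ag|))
        = (B + μ * |ag|) / (A + |ag|) := by
      field_simp
    rw [he1, le_div_iff₀ hd1]
    constructor
    · intro hle
      rcases le_or_gt lam μ with h1 | h1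
      · rw [abs_of_nonneg (by linarith : (0:ℝ) ≤ μ - lam)] at hle
        nlinarith
      · rw [abs_of_neg (by linarith : μ - lam < 0)] at hle
        nlinarith
    · intro hle
      have hlamμ : lam ≤ μ := by nlinarith
      rw [abs_of_nonneg (by linarith : (0:ℝ) ≤ μ - lam)]
      nlinarith
  · push_neg at hcase
    rw [hlam0] at hcase
    have hμlam : μ < lam := by
      rw [hlam0] at hlam; linarith
    have he2 : B / A * (A / (A - |ag|)) - μ * (|ag| / (A - |ag|))
        = (B - μ * |ag|) / (A - |ag|) := by
      field_simp
    rw [he2, le_div_iff₀ hd2, abs_of_neg (by linarith : μ - lam < 0)]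
    constructor
    · intro hle; nlinarith
    · intro hle; nlinarith
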